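/- Let $\tilde\gamma \in (0, 1/2)$, $\tilde m \in (1, \infty)$, and let $u : (0,1) \to \mathbb{R}$ be measurable with $u^{[\tilde m]} \in W^{\tilde\gamma, 2}(0,1)$ (Sobolev–Slobodeckij space). Then $u \in W^{\tilde\gamma/\tilde m, 2\tilde m}(0,1)$ and there is a constant $N = N(\tilde m)$ such that $\|u\|_{W^{\tilde\gamma/\tilde m, 2\tilde m}}^{2\tilde m} \le N \|u^{[\tilde m]}\|_{W^{\tilde\gamma, 2}}^{2}$. -/

import Mathlib

open MeasureTheory Set NNReal

noncomputable def opow (r p : ℝ) : ℝ := |r| ^ (p - 1) * r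

lemma abs_opow (r p : ℝ) (hp : 1 < p) : |opow r p| = |r| ^ p := by
  rcases eq_or_ne r 0 with rfl | hr
  · simp [opow, Real.zero_rpow (by linarith : p ≠ 0)]
  · rw [opow, abs_mul, abs_of_nonneg (Real.rpow_nonneg (abs_nonneg r) _)]
    rw [← Real.rpow_add_one (abs_ne_zero.2 hr)]
    ring_nf

lemma opow_neg (r p : ℝ) : opow (-r) p = - opow r p := by simp [opow]

lemma opow_of_nonneg (r p : ℝ) (hr : 0 ≤ r) (hp : 1 < p) : opow r p = r ^ p := by
  rcases eq_or_lt_of_le hr with rfl | hr'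
  · simp [opow, Real.zero_rpow (by linarith : p ≠ 0)]
  · rw [opow, abs_of_pos hr', ← Real.rpow_add_one hr'.ne']; ring_nf

lemma aux1 {x y p : ℝ} (hx : 0 ≤ x) (hy : 0 ≤ y) (hp : 1 ≤ p) :
    x ^ p + y ^ p ≤ (x + y) ^ p := by
  have h2 := NNReal.add_rpow_le_rpow_add (⟨x, hx⟩ : ℝ≥0) (⟨y, hy⟩ : ℝ≥0) hp
  have := NNReal.coe_le_coe.2 h2
  push_cast [NNReal.coe_rpow] at this
  convert this using 2 <;> rfl

lemma aux2 {x y p : ℝ} (hx : 0 ≤ x) (hy : 0 ≤ y) (hp : 1 ≤ p) :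
    (x + y) ^ p ≤ 2 ^ (p - 1) * (x ^ p + y ^ p) := by
  have h2 := NNReal.rpow_add_le_mul_rpow_add_rpow (⟨x, hx⟩ : ℝ≥0) (⟨y, hy⟩ : ℝ≥0) hp
  have := NNReal.coe_le_coe.2 h2
  push_cast [NNReal.coe_rpow] at this
  convert this using 2 <;> rfl

lemma one_le_two_rpow {p : ℝ} (hp : 0 ≤ p) : (1:ℝ) ≤ 2 ^ p := by
  calc (1:ℝ) = 2 ^ (0:ℝ) := (Real.rpow_zero 2).symm
  _ ≤ 2 ^ p := Real.rpow_le_rpow_of_exponent_le one_le_two hp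

lemma key_nn (tm : ℝ) (htm : 1 < tm) (a b : ℝ) (hb : 0 ≤ b) (hba : b ≤ a) :
    |a - b| ^ tm ≤ 2 ^ (tm - 1) * |opow a tm - opow b tm| := by
  have ha : 0 ≤ a := hb.trans hba
  rw [opow_of_nonneg a tm ha htm, opow_of_nonneg b tm hb htm]
  have h1 : (a - b) ^ tm + b ^ tm ≤ a ^ tm := by
    have := aux1 (sub_nonneg.2 hba) hb htm.le
    rwa [sub_add_cancel] at this
  have h0 : (0:ℝ) ≤ (a - b) ^ tm := Real.rpow_nonneg (sub_nonneg.2 hba) tm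
  have hbp : (0:ℝ) ≤ b ^ tm := Real.rpow_nonneg hb tm
  have h2 : (0:ℝ) ≤ a ^ tm - b ^ tm := by linarith
  have h3 := one_le_two_rpow (by linarith : (0:ℝ) ≤ tm - 1)
  rw [abs_of_nonneg (sub_nonneg.2 hba), abs_of_nonneg h2]
  nlinarith

lemma key_mix (tm : ℝ) (htm : 1 < tm) (a b : ℝ) (hb : b ≤ 0) (ha : 0 ≤ a) :
    |a - b| ^ tm ≤ 2 ^ (tm - 1) * |opow a tm - opow b tm| := by
  have hb2 : opow b tm = -((-b) ^ tm) := by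
    rw [← opow_of_nonneg (-b) tm (by linarith) htm, ← opow_neg, neg_neg]
  rw [opow_of_nonneg a tm ha htm, hb2, sub_neg_eq_add]
  have h2 : (0:ℝ) ≤ a ^ tm + (-b) ^ tm :=
    add_nonneg (Real.rpow_nonneg ha tm) (Real.rpow_nonneg (by linarith) tm)
  rw [abs_of_nonneg h2, abs_of_nonneg (by linarith : (0:ℝ) ≤ a - b)]
  have key2 := aux2 ha (by linarith : (0:ℝ) ≤ -b) htm.le
  calc (a - b) ^ tm = (a + -b) ^ tm := by ring_nf
  _ ≤ 2 ^ (tm - 1) * (a ^ tm + (-b) ^ tm) := key2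

lemma keyle (tm : ℝ) (htm : 1 < tm) (a b : ℝ) (hba : b ≤ a) :
    |a - b| ^ tm ≤ 2 ^ (tm - 1) * |opow a tm - opow b tm| := by
  rcases le_or_gt 0 b with hb | hb
  · exact key_nn tm htm a b hb hba
  rcases le_or_gt 0 a with ha | ha
  · exact key_mix tm htm a b hb.le ha
  · have := key_nn tm htm (-b) (-a) (by linarith) (by linarith)
    simp only [opow_neg] at this
    calc |a - b| ^ tm = |(-b) - (-a)| ^ tm := by rw [show (-b) - (-a) = -(b - a) by ring,
        abs_neg, abs_sub_comm]
    _ ≤ 2 ^ (tm - 1) * |(-opow b tm) - (-opow a tm)| := this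
    _ = 2 ^ (tm - 1) * |opow a tm - opow b tm| := by
        rw [show (-opow b tm) - (-opow a tm) = -(opow b tm - opow a tm) by ring, abs_neg,
          abs_sub_comm]

lemma key (tm : ℝ) (htm : 1 < tm) (a b : ℝ) :
    |a - b| ^ tm ≤ 2 ^ (tm - 1) * |opow a tm - opow b tm| := by
  rcases le_total b a with h | h
  · exact keyle tm htm a b h
  · rw [abs_sub_comm, abs_sub_comm (opow a tm)]
    exact keyle tm htm b a h

lemma key2 (tm : ℝ) (htm : 1 < tm) (a b : ℝ) :
    |a - b| ^ (2 * tm) ≤ 2 ^ ((tm - 1) * 2) * |opow a tm - opow b tm| ^ (2:ℝ) := by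
  have h := key tm htm a b
  have h1 : |a - b| ^ (2 * tm) = (|a - b| ^ tm) ^ (2:ℝ) := by
    rw [← Real.rpow_mul (abs_nonneg _), mul_comm tm 2]
  have h2 : (0:ℝ) ≤ |a - b| ^ tm := Real.rpow_nonneg (abs_nonneg _) tm
  have h3 := Real.rpow_le_rpow h2 h (by norm_num : (0:ℝ) ≤ 2)
  rw [Real.mul_rpow (Real.rpow_nonneg (by norm_num) _) (abs_nonneg _),
    ← Real.rpow_mul (by norm_num : (0:ℝ) ≤ 2)] at h3
  rw [h1]; exact h3

noncomputable def slob (γ p : ℝ) (v : ℝ → ℝ) : ENNReal :=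
  (∫⁻ x in Ioo (0:ℝ) 1, ENNReal.ofReal (|v x| ^ p)) +
    ∫⁻ z in (Ioo (0:ℝ) 1) ×ˢ (Ioo (0:ℝ) 1),
      ENNReal.ofReal (|v z.1 - v z.2| ^ p / |z.1 - z.2| ^ (1 + γ * p))

theorem stmt8 (tm : ℝ) (htm : 1 < tm) :
    ∃ N : ENNReal, N < ⊤ ∧ ∀ tγ : ℝ, tγ ∈ Ioo (0:ℝ) (1/2) → ∀ u : ℝ → ℝ,
      slob tγ 2 (fun x => opow (u x) tm) < ⊤ →
      slob (tγ / tm) (2 * tm) u ≤ N * slob tγ 2 (fun x => opow (u x) tm) := by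
  have hC : (0:ℝ) ≤ 2 ^ ((tm - 1) * 2) := Real.rpow_nonneg (by norm_num) _
  have hC1 : (1:ℝ) ≤ 2 ^ ((tm - 1) * 2) := one_le_two_rpow (by nlinarith)
  refine ⟨ENNReal.ofReal (2 ^ ((tm - 1) * 2)), ENNReal.ofReal_lt_top, ?_⟩
  intro tγ hγ u _
  set N := ENNReal.ofReal ((2:ℝ) ^ ((tm - 1) * 2)) with hN
  have hN1 : (1:ENNReal) ≤ N := by
    rw [hN, ← ENNReal.ofReal_one]
    exact ENNReal.ofReal_le_ofReal hC1
  have htm0 : tm ≠ 0 := by linarith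
  unfold slob
  have hT1 : (∫⁻ x in Ioo (0:ℝ) 1, ENNReal.ofReal (|u x| ^ (2 * tm))) =
      ∫⁻ x in Ioo (0:ℝ) 1, ENNReal.ofReal (|(fun x => opow (u x) tm) x| ^ (2:ℝ)) := by
    refine lintegral_congr fun x => ?_
    congr 1
    simp only []
    rw [abs_opow _ _ htm, ← Real.rpow_mul (abs_nonneg _), mul_comm tm 2]
  have hexp : 1 + tγ / tm * (2 * tm) = 1 + tγ * 2 := by field_simp
  have hT2 : (∫⁻ z in (Ioo (0:ℝ) 1) ×ˢ (Ioo (0:ℝ) 1),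
      ENNReal.ofReal (|u z.1 - u z.2| ^ (2 * tm) / |z.1 - z.2| ^ (1 + tγ / tm * (2 * tm)))) ≤
      N * ∫⁻ z in (Ioo (0:ℝ) 1) ×ˢ (Ioo (0:ℝ) 1),
        ENNReal.ofReal (|(fun x => opow (u x) tm) z.1 - (fun x => opow (u x) tm) z.2| ^ (2:ℝ) /
          |z.1 - z.2| ^ (1 + tγ * (2:ℝ))) := by
    rw [← lintegral_const_mul' N _ ENNReal.ofReal_ne_top]
    refine lintegral_mono fun z => ?_
    simp only [hexp]
    set k := |z.1 - z.2| ^ (1 + tγ * 2) with hk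
    by_cases hk0 : k = 0
    · simp [hk0]
    have hkpos : 0 < k := lt_of_le_of_ne (Real.rpow_nonneg (abs_nonneg _) _) (Ne.symm hk0)
    have hnum := key2 tm htm (u z.1) (u z.2)
    have hdiv : |u z.1 - u z.2| ^ (2 * tm) / k ≤
        2 ^ ((tm - 1) * 2) * (|opow (u z.1) tm - opow (u z.2) tm| ^ (2:ℝ) / k) := by
      rw [← mul_div_assoc]
      exact (div_le_div_iff_of_pos_right hkpos).2 hnum
    calc ENNReal.ofReal (|u z.1 - u z.2| ^ (2 * tm) / k)
        ≤ ENNReal.ofReal (2 ^ ((tm - 1) * 2) *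
            (|opow (u z.1) tm - opow (u z.2) tm| ^ (2:ℝ) / k)) := ENNReal.ofReal_le_ofReal hdiv
      _ = N * ENNReal.ofReal (|opow (u z.1) tm - opow (u z.2) tm| ^ (2:ℝ) / k) := by
          rw [ENNReal.ofReal_mul hC]
  rw [hT1, mul_add]
  exact add_le_add (le_mul_of_one_le_left zero_le hN1) hT2
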